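/- Let A be a bounded invertible positive operator with A ≥ ε > 0, and Λ a bounded operator such that [A, Λ] is trace class. Then [A^{-1}, Λ] and [A^{-1/2}, Λ] are trace class. -/

import Mathlib

open scoped ENNReal InnerProductSpace
set_option synthInstance.maxHeartbeats 1000000
set_option maxHeartbeats 1000000

/-- The trace norm, defined as the supremum over pairs of finite orthonormal systems. -/
noncomputable def traceNorm {H : Type*} [NormedAddCommGroup H] [InnerProductSpace ℂ H]
    (T : H → H) : ℝ≥0∞ :=
  ⨆ (n : ℕ) (e : Fin n → H) (f : Fin n → H) (_ : Orthonormal ℂ e) (_ : Orthonormal ℂ f),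
    ∑ i, ENNReal.ofReal ‖(inner ℂ (e i) (T (f i)) : ℂ)‖

/-- `T` is trace class iff its trace norm is finite. -/
def IsTraceClass {H : Type*} [NormedAddCommGroup H] [InnerProductSpace ℂ H]
    (T : H → H) : Prop :=
  traceNorm T ≠ ⊤

section TNBasic

variable {H : Type*} [NormedAddCommGroup H] [InnerProductSpace ℂ H]

lemma sum_le_traceNorm (T : H → H) {n : ℕ} (e f : Fin n → H) (he : Orthonormal ℂ e)
    (hf : Orthonormal ℂ f) :
    ∑ i, ENNReal.ofReal ‖(inner ℂ (e i) (T (f i)) : ℂ)‖ ≤ traceNorm T :=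
  le_iSup_of_le n <| le_iSup_of_le e <| le_iSup_of_le f <| le_iSup_of_le he <|
    le_iSup_of_le hf le_rfl

lemma traceNorm_le {T : H → H} {C : ℝ≥0∞}
    (h : ∀ (n : ℕ) (e f : Fin n → H), Orthonormal ℂ e → Orthonormal ℂ f →
      ∑ i, ENNReal.ofReal ‖(inner ℂ (e i) (T (f i)) : ℂ)‖ ≤ C) : traceNorm T ≤ C :=
  iSup_le fun n => iSup_le fun e => iSup_le fun f => iSup_le fun he => iSup_le fun hf =>
    h n e f he hf

lemma traceNorm_zero' : traceNorm (⇑(0 : H →L[ℂ] H)) = 0 := by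
  refine le_antisymm (traceNorm_le ?_) zero_le
  intro n e f he hf
  simp

lemma traceNorm_eq_zero_of_subsingleton [Subsingleton H] (T : H → H) : traceNorm T = 0 := by
  refine le_antisymm (traceNorm_le fun n e f he hf => ?_) zero_le
  have h0 : ∀ i, T (f i) = (0 : H) := fun i => Subsingleton.elim _ _
  simp [h0]

lemma traceNorm_add_le (T S : H →L[ℂ] H) :
    traceNorm ⇑(T + S) ≤ traceNorm ⇑T + traceNorm ⇑S := by
  refine traceNorm_le fun n e f he hf => ?_
  calc ∑ i, ENNReal.ofReal ‖(inner ℂ (e i) ((T + S) (f i)) : ℂ)‖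
      ≤ ∑ i, (ENNReal.ofReal ‖(inner ℂ (e i) (T (f i)) : ℂ)‖
          + ENNReal.ofReal ‖(inner ℂ (e i) (S (f i)) : ℂ)‖) := by
        refine Finset.sum_le_sum fun i _ => ?_
        rw [ContinuousLinearMap.add_apply, inner_add_right]
        exact le_trans (ENNReal.ofReal_le_ofReal (norm_add_le _ _)) ENNReal.ofReal_add_le
    _ = _ + _ := Finset.sum_add_distrib
    _ ≤ _ := add_le_add (sum_le_traceNorm _ e f he hf) (sum_le_traceNorm _ e f he hf)

lemma traceNorm_smul_le (c : ℂ) (T : H →L[ℂ] H) :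
    traceNorm ⇑(c • T) ≤ ENNReal.ofReal ‖c‖ * traceNorm ⇑T := by
  refine traceNorm_le fun n e f he hf => ?_
  calc ∑ i, ENNReal.ofReal ‖(inner ℂ (e i) ((c • T) (f i)) : ℂ)‖
      = ∑ i, ENNReal.ofReal ‖c‖ * ENNReal.ofReal ‖(inner ℂ (e i) (T (f i)) : ℂ)‖ := by
        refine Finset.sum_congr rfl fun i _ => ?_
        rw [ContinuousLinearMap.smul_apply, inner_smul_right, ← ENNReal.ofReal_mul (norm_nonneg _),
          norm_mul]
    _ = ENNReal.ofReal ‖c‖ * ∑ i, ENNReal.ofReal ‖(inner ℂ (e i) (T (f i)) : ℂ)‖ :=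
        (Finset.mul_sum _ _ _).symm
    _ ≤ _ := mul_le_mul_right (sum_le_traceNorm _ e f he hf) _

variable [CompleteSpace H]

lemma traceNorm_unitary_mul (U V T : H →L[ℂ] H) (hU : U * star U = 1) (hV : star V * V = 1) :
    traceNorm ⇑(U * T * V) ≤ traceNorm ⇑T := by
  refine traceNorm_le fun n e f he hf => ?_
  have hUe : Orthonormal ℂ (fun i => (ContinuousLinearMap.adjoint U) (e i)) := by
    rw [orthonormal_iff_ite] at he ⊢
    intro i j
    rw [ContinuousLinearMap.adjoint_inner_left]
    have h1 : U ((ContinuousLinearMap.adjoint U) (e j)) = e j := by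
      have := congrArg (fun O : H →L[ℂ] H => O (e j)) hU
      simpa [ContinuousLinearMap.star_eq_adjoint] using this
    rw [h1]; exact he i j
  have hVf : Orthonormal ℂ (fun i => V (f i)) := by
    rw [orthonormal_iff_ite] at hf ⊢
    intro i j
    rw [← ContinuousLinearMap.adjoint_inner_left V]
    have h1 : (ContinuousLinearMap.adjoint V) (V (f i)) = f i := by
      have := congrArg (fun O : H →L[ℂ] H => O (f i)) hV
      simpa [ContinuousLinearMap.star_eq_adjoint] using this
    rw [h1]; exact hf i j
  refine le_trans (le_of_eq ?_) (sum_le_traceNorm ⇑T _ _ hUe hVf)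
  refine Finset.sum_congr rfl fun i _ => ?_
  congr 1
  rw [ContinuousLinearMap.mul_apply, ContinuousLinearMap.mul_apply,
    ← ContinuousLinearMap.adjoint_inner_left U]

end TNBasic

section Unitary

variable {H : Type*} [NormedAddCommGroup H] [InnerProductSpace ℂ H] [CompleteSpace H] [Nontrivial H]

lemma exists_unitary_half (S : H →L[ℂ] H) (hS : IsSelfAdjoint S) (h1 : ‖S‖ ≤ 1) :
    ∃ U : H →L[ℂ] H, U * star U = 1 ∧ star U * U = 1 ∧ S = (2⁻¹ : ℂ) • (U + star U) := by
  haveI : IsStarNormal S := hS.isStarNormal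
  set f : ℂ → ℂ := fun z => z + Complex.I * ((Real.sqrt (1 - z.re ^ 2) : ℝ) : ℂ) with hf
  have hfc : Continuous f := by
    apply continuous_id.add
    exact continuous_const.mul (Complex.continuous_ofReal.comp
      (Real.continuous_sqrt.comp (continuous_const.sub (Complex.continuous_re.pow 2))))
  have hspec : ∀ z ∈ spectrum ℂ S, z = (z.re : ℂ) ∧ z.re ^ 2 ≤ 1 := by
    intro z hz
    refine ⟨hS.mem_spectrum_eq_re hz, ?_⟩
    have h2 : ‖z‖ ≤ ‖S‖ := spectrum.norm_le_norm_of_mem hz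
    have h3 : |z.re| ≤ ‖z‖ := Complex.abs_re_le_norm z
    nlinarith [abs_nonneg z.re, sq_abs z.re]
  set U : H →L[ℂ] H := cfc f S with hU
  have hstar : star U = cfc (fun z => star (f z)) S := (cfc_star f S).symm
  have key : ∀ z ∈ spectrum ℂ S, f z * star (f z) = 1 ∧ star (f z) * f z = 1 ∧
      f z + star (f z) = 2 * z := by
    intro z hz
    obtain ⟨hzre, hz1⟩ := hspec z hz
    set x : ℝ := z.re
    set s : ℝ := Real.sqrt (1 - x ^ 2) with hs
    have hnn : (0:ℝ) ≤ 1 - x ^ 2 := by linarith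
    have hs2 : s ^ 2 = 1 - x ^ 2 := Real.sq_sqrt hnn
    have hfz : f z = (x : ℂ) + Complex.I * (s : ℂ) := by rw [hf]; simp only; rw [← hzre]
    have hstarfz : star (f z) = (x : ℂ) - Complex.I * (s : ℂ) := by
      rw [hfz]; simp [star_add, star_mul', Complex.conj_ofReal, Complex.conj_I]; ring
    have hs2' : (s : ℂ) ^ 2 = 1 - (x : ℂ) ^ 2 := by
      rw [← Complex.ofReal_pow, hs2]; push_cast; ring
    refine ⟨?_, ?_, ?_⟩
    · rw [hstarfz, hfz]
      have : ((x:ℂ) + Complex.I * s) * ((x:ℂ) - Complex.I * s)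
          = (x:ℂ)^2 - Complex.I^2 * (s:ℂ)^2 := by ring
      rw [this, Complex.I_sq, hs2']; ring
    · rw [hstarfz, hfz]
      have : ((x:ℂ) - Complex.I * s) * ((x:ℂ) + Complex.I * s)
          = (x:ℂ)^2 - Complex.I^2 * (s:ℂ)^2 := by ring
      rw [this, Complex.I_sq, hs2']; ring
    · rw [hstarfz, hfz, ← hzre]; ring
  refine ⟨U, ?_, ?_, ?_⟩
  · rw [hstar, hU, ← cfc_mul _ _ S hfc.continuousOn (hfc.star.continuousOn)]
    rw [cfc_congr (fun z hz => (key z hz).1), cfc_const_one ℂ S]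
  · rw [hstar, hU, ← cfc_mul _ _ S (hfc.star.continuousOn) hfc.continuousOn]
    rw [cfc_congr (fun z hz => (key z hz).2.1), cfc_const_one ℂ S]
  · have : U + star U = cfc (fun z : ℂ => 2 * z) S := by
      rw [hstar, hU, ← cfc_add S _ _ hfc.continuousOn (hfc.star.continuousOn)]
      exact cfc_congr fun z hz => (key z hz).2.2
    rw [this]
    have h2 : cfc (fun z : ℂ => 2 * z) S = (2:ℂ) • S := by
      rw [← cfc_id ℂ S, ← cfc_smul (2:ℂ) _ S, cfc_id ℂ S]
      rfl
    rw [h2, smul_smul]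
    norm_num

lemma half_half (t : ℝ≥0∞) : ENNReal.ofReal ‖(2⁻¹ : ℂ)‖ * (t + t) ≤ t := by
  have h2 : ENNReal.ofReal ‖(2⁻¹ : ℂ)‖ = 2⁻¹ := by
    rw [norm_inv]
    rw [ENNReal.ofReal_inv_of_pos (by norm_num)]
    norm_num
  rw [h2, ← two_mul, ← mul_assoc, ENNReal.inv_mul_cancel two_ne_zero ENNReal.ofNat_ne_top, one_mul]

lemma tn_mul_left_sa (S T : H →L[ℂ] H) (hS : IsSelfAdjoint S) (h1 : ‖S‖ ≤ 1) :
    traceNorm ⇑(S * T) ≤ traceNorm ⇑T := by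
  obtain ⟨U, hU1, hU2, hhalf⟩ := exists_unitary_half S hS h1
  have hrw : S * T = (2⁻¹ : ℂ) • (U * T * 1 + star U * T * 1) := by
    rw [hhalf]; simp only [mul_one]; rw [smul_mul_assoc, add_mul]
  rw [hrw]
  refine le_trans (traceNorm_smul_le _ _) (le_trans (mul_le_mul_right
    (le_trans (traceNorm_add_le _ _) (add_le_add
      (traceNorm_unitary_mul U 1 T hU1 (by simp))
      (traceNorm_unitary_mul (star U) 1 T (by rwa [star_star]) (by simp)))) _) (half_half _))

lemma tn_mul_right_sa (S T : H →L[ℂ] H) (hS : IsSelfAdjoint S) (h1 : ‖S‖ ≤ 1) :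
    traceNorm ⇑(T * S) ≤ traceNorm ⇑T := by
  obtain ⟨U, hU1, hU2, hhalf⟩ := exists_unitary_half S hS h1
  have hrw : T * S = (2⁻¹ : ℂ) • (1 * T * U + 1 * T * star U) := by
    rw [hhalf]; simp only [one_mul]; rw [mul_smul_comm, mul_add]
  rw [hrw]
  refine le_trans (traceNorm_smul_le _ _) (le_trans (mul_le_mul_right
    (le_trans (traceNorm_add_le _ _) (add_le_add
      (traceNorm_unitary_mul 1 U T (by simp) hU2)
      (traceNorm_unitary_mul 1 (star U) T (by simp) (by rwa [star_star])))) _) (half_half _))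

lemma tn_mul_left (S T : H →L[ℂ] H) (hS : IsSelfAdjoint S) :
    traceNorm ⇑(S * T) ≤ ENNReal.ofReal ‖S‖ * traceNorm ⇑T := by
  rcases eq_or_ne ‖S‖ 0 with h0 | h0
  · rw [norm_eq_zero] at h0
    simp [h0, traceNorm_zero']
    exact traceNorm_zero'
  · have hpos : 0 < ‖S‖ := (norm_nonneg S).lt_of_ne (Ne.symm h0)
    set c : ℂ := ((‖S‖⁻¹ : ℝ) : ℂ) with hc
    have hSc : IsSelfAdjoint (c • S) := by
      rw [IsSelfAdjoint, star_smul, hc, Complex.star_def, Complex.conj_ofReal, hS.star_eq]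
    have hnc : ‖c • S‖ ≤ 1 := by
      rw [norm_smul, hc, Complex.norm_real, Real.norm_eq_abs, abs_of_nonneg (by positivity),
        inv_mul_cancel₀ h0]
    have hrw : S * T = ((‖S‖ : ℝ) : ℂ) • ((c • S) * T) := by
      rw [smul_mul_assoc, smul_smul, hc, ← Complex.ofReal_mul, mul_inv_cancel₀ h0]
      simp
    rw [hrw]
    refine le_trans (traceNorm_smul_le _ _) ?_
    have : ENNReal.ofReal ‖((‖S‖ : ℝ) : ℂ)‖ = ENNReal.ofReal ‖S‖ := by
      rw [Complex.norm_real, Real.norm_eq_abs, abs_of_nonneg (norm_nonneg S)]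
    rw [this]
    exact mul_le_mul_right (tn_mul_left_sa _ T hSc hnc) _

lemma tn_mul_right (S T : H →L[ℂ] H) (hS : IsSelfAdjoint S) :
    traceNorm ⇑(T * S) ≤ ENNReal.ofReal ‖S‖ * traceNorm ⇑T := by
  rcases eq_or_ne ‖S‖ 0 with h0 | h0
  · rw [norm_eq_zero] at h0
    simp [h0, traceNorm_zero']
    exact traceNorm_zero'
  · have hpos : 0 < ‖S‖ := (norm_nonneg S).lt_of_ne (Ne.symm h0)
    set c : ℂ := ((‖S‖⁻¹ : ℝ) : ℂ) with hc
    have hSc : IsSelfAdjoint (c • S) := by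
      rw [IsSelfAdjoint, star_smul, hc, Complex.star_def, Complex.conj_ofReal, hS.star_eq]
    have hnc : ‖c • S‖ ≤ 1 := by
      rw [norm_smul, hc, Complex.norm_real, Real.norm_eq_abs, abs_of_nonneg (by positivity),
        inv_mul_cancel₀ h0]
    have hrw : T * S = ((‖S‖ : ℝ) : ℂ) • (T * (c • S)) := by
      rw [mul_smul_comm, smul_smul, hc, ← Complex.ofReal_mul, mul_inv_cancel₀ h0]
      simp
    rw [hrw]
    refine le_trans (traceNorm_smul_le _ _) ?_
    have : ENNReal.ofReal ‖((‖S‖ : ℝ) : ℂ)‖ = ENNReal.ofReal ‖S‖ := by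
      rw [Complex.norm_real, Real.norm_eq_abs, abs_of_nonneg (norm_nonneg S)]
    rw [this]
    exact mul_le_mul_right (tn_mul_right_sa _ T hSc hnc) _

omit [Nontrivial H] in
lemma tn_tsum_le (T : ℕ → H →L[ℂ] H) (hsum : Summable fun k => ‖T k‖) :
    traceNorm ⇑(∑' k, T k) ≤ ∑' k, traceNorm ⇑(T k) := by
  have hTsum : Summable T := hsum.of_norm
  refine traceNorm_le fun n e f he hf => ?_
  have hterm : ∀ i, (inner ℂ (e i) ((∑' k, T k) (f i)) : ℂ) = ∑' k, (inner ℂ (e i) (T k (f i)) : ℂ) := by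
    intro i
    have h1 : (∑' k, T k) (f i) = ∑' k, T k (f i) :=
      (ContinuousLinearMap.apply ℂ H (f i)).map_tsum hTsum
    rw [h1]
    exact (innerSL ℂ (e i)).map_tsum (hTsum.map (ContinuousLinearMap.apply ℂ H (f i))
      (ContinuousLinearMap.apply ℂ H (f i)).continuous)
  have hsummable : ∀ i, Summable fun k => ‖(inner ℂ (e i) (T k (f i)) : ℂ)‖ := by
    intro i
    refine hsum.of_nonneg_of_le (fun k => norm_nonneg _) fun k => ?_
    calc ‖(inner ℂ (e i) (T k (f i)) : ℂ)‖ ≤ ‖e i‖ * ‖T k (f i)‖ := norm_inner_le_norm _ _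
      _ ≤ ‖e i‖ * (‖T k‖ * ‖f i‖) := by
          exact mul_le_mul_of_nonneg_left ((T k).le_opNorm _) (norm_nonneg _)
      _ = ‖T k‖ := by rw [he.1 i, hf.1 i]; ring
  calc ∑ i, ENNReal.ofReal ‖(inner ℂ (e i) ((∑' k, T k) (f i)) : ℂ)‖
      ≤ ∑ i, ∑' k, ENNReal.ofReal ‖(inner ℂ (e i) (T k (f i)) : ℂ)‖ := by
        refine Finset.sum_le_sum fun i _ => ?_
        rw [hterm i]
        refine le_trans (ENNReal.ofReal_le_ofReal (norm_tsum_le_tsum_norm (hsummable i))) ?_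
        exact le_of_eq (ENNReal.ofReal_tsum_of_nonneg (fun k => norm_nonneg _) (hsummable i))
    _ = ∑' k, ∑ i, ENNReal.ofReal ‖(inner ℂ (e i) (T k (f i)) : ℂ)‖ := by
        rw [← tsum_fintype (L := SummationFilter.unconditional (Fin n)), ENNReal.tsum_comm]
        exact tsum_congr fun k => tsum_fintype _
    _ ≤ ∑' k, traceNorm ⇑(T k) := ENNReal.tsum_le_tsum fun k => sum_le_traceNorm _ e f he hf

end Unitary

section Coercive

variable {H : Type*} [NormedAddCommGroup H] [InnerProductSpace ℂ H] [CompleteSpace H]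

lemma isUnit_of_coercive (T : H →L[ℂ] H) {δ : ℝ} (hδ : 0 < δ)
    (h : ∀ ψ : H, δ * ‖ψ‖ ^ 2 ≤ (inner ℂ ψ (T ψ) : ℂ).re) : IsUnit T := by
  rcases subsingleton_or_nontrivial H with hsub | hnt
  · haveI : Subsingleton (H →L[ℂ] H) := ⟨fun a b => by ext x; exact Subsingleton.elim _ _⟩
    exact isUnit_of_subsingleton T
  set M : ℝ := ‖T‖ with hMdef
  have hM0 : 0 ≤ M := norm_nonneg T
  have hδM : δ ≤ M := by
    obtain ⟨ψ, hψ⟩ := exists_ne (0 : H)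
    have hn : 0 < ‖ψ‖ := norm_pos_iff.mpr hψ
    have h1 := h ψ
    have h2 : (inner ℂ ψ (T ψ) : ℂ).re ≤ ‖ψ‖ * ‖T ψ‖ := by
      refine le_trans (Complex.re_le_norm _) ?_
      exact norm_inner_le_norm _ _
    have h3 : ‖T ψ‖ ≤ M * ‖ψ‖ := T.le_opNorm ψ
    nlinarith [mul_le_mul_of_nonneg_left h3 (norm_nonneg ψ), mul_pos hn hn]
  set c : ℝ := δ / (M ^ 2 + 1) with hc
  have hc0 : 0 < c := by positivity
  have hcδ : c * δ < 1 := by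
    rw [hc, div_mul_eq_mul_div, div_lt_one (by positivity)]
    nlinarith
  have hcM : c * M ^ 2 ≤ δ := by
    rw [hc, div_mul_eq_mul_div, div_le_iff₀ (by positivity)]
    nlinarith
  have key : ∀ ψ : H, ‖(1 - (c : ℂ) • T) ψ‖ ^ 2 ≤ (1 - c * δ) * ‖ψ‖ ^ 2 := by
    intro ψ
    have happ : (1 - (c : ℂ) • T) ψ = ψ - (c : ℂ) • T ψ := by
      simp [ContinuousLinearMap.sub_apply]
    rw [happ, @norm_sub_sq ℂ]
    have hre : RCLike.re (inner ℂ ψ ((c : ℂ) • T ψ) : ℂ) = c * (inner ℂ ψ (T ψ) : ℂ).re := by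
      rw [inner_smul_right]
      simp [Complex.mul_re]
    rw [hre]
    have hn : ‖(c : ℂ) • T ψ‖ = c * ‖T ψ‖ := by
      rw [norm_smul, Complex.norm_real, Real.norm_eq_abs, abs_of_pos hc0]
    rw [hn]
    have h3 : ‖T ψ‖ ≤ M * ‖ψ‖ := T.le_opNorm ψ
    have h4 := h ψ
    have h5 : (c * ‖T ψ‖) ^ 2 ≤ (c * (M * ‖ψ‖)) ^ 2 := by
      have := mul_le_mul_of_nonneg_left h3 hc0.le
      exact pow_le_pow_left₀ (by positivity) this 2
    have h6 := mul_le_mul_of_nonneg_left h4 hc0.le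
    have h7 := mul_le_mul_of_nonneg_right hcM (sq_nonneg ‖ψ‖)
    nlinarith [norm_nonneg (T ψ), norm_nonneg ψ]
  set q : ℝ := Real.sqrt (1 - c * δ) with hq
  have hq0 : 0 ≤ q := Real.sqrt_nonneg _
  have hq1 : q < 1 := by
    have : q ^ 2 = 1 - c * δ := Real.sq_sqrt (by nlinarith)
    nlinarith
  have hop : ‖1 - (c : ℂ) • T‖ ≤ q := by
    refine ContinuousLinearMap.opNorm_le_bound _ hq0 fun ψ => ?_
    have h1 : ‖(1 - (c : ℂ) • T) ψ‖ = Real.sqrt (‖(1 - (c : ℂ) • T) ψ‖ ^ 2) :=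
      (Real.sqrt_sq (norm_nonneg _)).symm
    rw [h1]
    refine le_trans (Real.sqrt_le_sqrt (key ψ)) ?_
    rw [Real.sqrt_mul (by nlinarith), Real.sqrt_sq (norm_nonneg _)]
  have hlt : ‖1 - (c : ℂ) • T‖ < 1 := lt_of_le_of_lt hop hq1
  have hu : IsUnit ((c : ℂ) • T) := by
    have := (Units.oneSub (1 - (c : ℂ) • T) hlt).isUnit
    simpa [sub_sub_cancel] using this
  have hcC : ((c : ℝ) : ℂ) ≠ 0 := by exact_mod_cast hc0.ne'
  have hc1 : IsUnit ((c : ℂ) • (1 : H →L[ℂ] H)) := by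
    refine isUnit_iff_exists.mpr ⟨((c : ℂ))⁻¹ • (1 : H →L[ℂ] H), ?_, ?_⟩
    · rw [smul_mul_assoc, one_mul, smul_smul, mul_inv_cancel₀ hcC, one_smul]
    · rw [smul_mul_assoc, one_mul, smul_smul, inv_mul_cancel₀ hcC, one_smul]
  obtain ⟨v, hv⟩ := hc1
  have hrw : T = ↑v⁻¹ * ((c : ℂ) • T) := by
    have : (c : ℂ) • T = ((c : ℂ) • (1 : H →L[ℂ] H)) * T := by
      rw [smul_mul_assoc, one_mul]
    rw [this, ← hv, ← mul_assoc, Units.inv_mul, one_mul]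
  rw [hrw]
  exact (v⁻¹).isUnit.mul hu

lemma spectrum_subset_Icc (A : H →L[ℂ] H) {ε : ℝ} (hε : 0 < ε)
    (hpos : ∀ ψ : H, ε * ‖ψ‖ ^ 2 ≤ (inner ℂ ψ (A ψ) : ℂ).re) :
    spectrum ℝ A ⊆ Set.Icc ε ‖A‖ := by
  intro x hx
  by_contra hnot
  rw [Set.mem_Icc, not_and_or] at hnot
  rw [spectrum.mem_iff] at hx
  apply hx
  rw [Algebra.algebraMap_eq_smul_one]
  have happ : ∀ ψ : H, ((x • (1 : H →L[ℂ] H)) ψ) = ((x : ℂ) • ψ) := by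
    intro ψ
    simp [ContinuousLinearMap.smul_apply]
  rcases hnot with hlt | hgt
  · push_neg at hlt
    have hcoer : ∀ ψ : H, (ε - x) * ‖ψ‖ ^ 2 ≤ (inner ℂ ψ ((A - x • 1) ψ) : ℂ).re := by
      intro ψ
      rw [ContinuousLinearMap.sub_apply, inner_sub_right, Complex.sub_re, happ,
        inner_smul_right]
      have : ((x : ℂ) * (inner ℂ ψ ψ : ℂ)).re = x * ‖ψ‖ ^ 2 := by
        rw [← inner_self_eq_norm_sq (𝕜 := ℂ)]
        simp [Complex.mul_re]
      rw [this]
      have := hpos ψ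
      nlinarith
    have := (isUnit_of_coercive (A - x • 1) (by linarith : (0:ℝ) < ε - x) hcoer).neg
    simpa [neg_sub] using this
  · push_neg at hgt
    have hcoer : ∀ ψ : H, (x - ‖A‖) * ‖ψ‖ ^ 2 ≤ (inner ℂ ψ ((x • 1 - A) ψ) : ℂ).re := by
      intro ψ
      rw [ContinuousLinearMap.sub_apply, inner_sub_right, Complex.sub_re, happ,
        inner_smul_right]
      have h1 : ((x : ℂ) * (inner ℂ ψ ψ : ℂ)).re = x * ‖ψ‖ ^ 2 := by
        rw [← inner_self_eq_norm_sq (𝕜 := ℂ)]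
        simp [Complex.mul_re]
      rw [h1]
      have h2 : (inner ℂ ψ (A ψ) : ℂ).re ≤ ‖ψ‖ * ‖A ψ‖ := by
        refine le_trans (Complex.re_le_norm _) ?_
        exact norm_inner_le_norm _ _
      have h3 : ‖A ψ‖ ≤ ‖A‖ * ‖ψ‖ := A.le_opNorm ψ
      nlinarith [norm_nonneg ψ, norm_nonneg A]
    exact isUnit_of_coercive (x • 1 - A) (by linarith : (0:ℝ) < x - ‖A‖) hcoer

end Coercive

/-- Generic commutator identity: if `pb` is a two-sided inverse of `b`, then
`[pb, l] = -(pb * ([b, l] * pb))`. -/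
lemma commutator_inverse_eq {R : Type*} [Ring R] (b pb l : R) (h1 : pb * b = 1)
    (h2 : b * pb = 1) : pb * l - l * pb = -(pb * ((b * l - l * b) * pb)) := by
  have h3 : pb * ((b * l - l * b) * pb) = (pb * b) * (l * pb) - (pb * l) * (b * pb) := by
    noncomm_ring
  rw [h3, h1, h2, one_mul, mul_one, neg_sub]

/-- Let `A` be a bounded invertible positive operator with `A ≥ ε > 0` and `Λ` bounded with
`[A, Λ]` trace class.  Then `[A⁻¹, Λ]` and `[A^{-1/2}, Λ]` are trace class. -/
theorem commutator_inverse_traceClass {H : Type*} [NormedAddCommGroup H]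
    [InnerProductSpace ℂ H] [CompleteSpace H]
    (A Λ : H →L[ℂ] H) (hA : IsSelfAdjoint A) (ε : ℝ) (hε : 0 < ε)
    (hpos : ∀ ψ : H, ε * ‖ψ‖ ^ 2 ≤ (inner ℂ ψ (A ψ) : ℂ).re)
    (hcomm : IsTraceClass (fun ψ => (A ∘L Λ - Λ ∘L A) ψ)) :
    IsTraceClass (fun ψ => (Ring.inverse A ∘L Λ - Λ ∘L Ring.inverse A) ψ) ∧
      IsTraceClass (fun ψ =>
        (Ring.inverse (CFC.sqrt A) ∘L Λ - Λ ∘L Ring.inverse (CFC.sqrt A)) ψ) := by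
  rcases subsingleton_or_nontrivial H with hsub | hnt
  · constructor <;>
    · show traceNorm _ ≠ ⊤
      rw [traceNorm_eq_zero_of_subsingleton]
      exact ENNReal.zero_ne_top
  have hT : traceNorm ⇑(A * Λ - Λ * A) ≠ ⊤ := hcomm
  set M : ℝ := ‖A‖ with hM
  have hσ : spectrum ℝ A ⊆ Set.Icc ε M := spectrum_subset_Icc A hε hpos
  set m : ℝ := Real.sqrt ε with hmdef
  have hm : 0 < m := Real.sqrt_pos.mpr hε
  set μ : ℝ := Real.sqrt M + m + 1 with hμdef
  have hM0 : 0 ≤ M := norm_nonneg A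
  have hsqM : 0 ≤ Real.sqrt M := Real.sqrt_nonneg M
  have hμm : m + 1 ≤ μ := by rw [hμdef]; linarith
  have hμpos : 0 < μ := by rw [hμdef]; positivity
  have hσ1 : ∀ x ∈ spectrum ℝ A, m ≤ Real.sqrt x ∧ Real.sqrt x ≤ Real.sqrt M ∧ ε ≤ x := by
    intro x hx
    obtain ⟨h1, h2⟩ := hσ hx
    exact ⟨Real.sqrt_le_sqrt h1, Real.sqrt_le_sqrt h2, h1⟩
  -- the square root of `A`
  set B : H →L[ℂ] H := cfc Real.sqrt A with hBdef
  have hBsa : IsSelfAdjoint B := cfc_predicate _ A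
  have hsqrtcont : ContinuousOn Real.sqrt (spectrum ℝ A) := Real.continuous_sqrt.continuousOn
  have hBB : B * B = A := by
    rw [hBdef]
    calc cfc Real.sqrt A * cfc Real.sqrt A
        = cfc (fun x : ℝ => Real.sqrt x * Real.sqrt x) A :=
          (cfc_mul Real.sqrt Real.sqrt A hsqrtcont hsqrtcont).symm
      _ = cfc (fun x : ℝ => x) A := cfc_congr fun x hx =>
          Real.mul_self_sqrt (le_trans hε.le (hσ1 x hx).2.2)
      _ = A := cfc_id' ℝ A
  have hBnn : (0 : H →L[ℂ] H) ≤ B := cfc_nonneg fun x hx => Real.sqrt_nonneg x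
  have hsqrtA : CFC.sqrt A = B := CFC.sqrt_unique hBB hBnn
  -- resolvent-type operators
  set W : H →L[ℂ] H := B + algebraMap ℝ (H →L[ℂ] H) μ with hWdef
  have hWcfc : W = cfc (fun x => Real.sqrt x + μ) A := by
    rw [hWdef, hBdef, ← cfc_const μ A hA,
      ← cfc_add A Real.sqrt (fun _ => μ) hsqrtcont continuousOn_const]
  have haddcont : ContinuousOn (fun x : ℝ => Real.sqrt x + μ) (spectrum ℝ A) :=
    (Real.continuous_sqrt.add continuous_const).continuousOn
  have hinvcont : ContinuousOn (fun x : ℝ => (Real.sqrt x + μ)⁻¹) (spectrum ℝ A) := by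
    refine ContinuousOn.inv₀ haddcont fun x _ => ?_
    have := Real.sqrt_nonneg x; positivity
  set P : H →L[ℂ] H := cfc (fun x : ℝ => (Real.sqrt x + μ)⁻¹) A with hPdef
  have hPsa : IsSelfAdjoint P := cfc_predicate _ A
  have hne : ∀ x : ℝ, Real.sqrt x + μ ≠ 0 := by
    intro x; have := Real.sqrt_nonneg x; positivity
  have hPW : P * W = 1 := by
    rw [hPdef, hWcfc, ← cfc_mul _ _ A hinvcont haddcont]
    rw [cfc_congr (g := fun _ => 1) fun x _ => inv_mul_cancel₀ (hne x), cfc_const_one ℝ A]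
  have hWP : W * P = 1 := by
    rw [hPdef, hWcfc, ← cfc_mul _ _ A haddcont hinvcont]
    rw [cfc_congr (g := fun _ => 1) fun x _ => mul_inv_cancel₀ (hne x), cfc_const_one ℝ A]
  set Q : H →L[ℂ] H := B - algebraMap ℝ (H →L[ℂ] H) μ with hQdef
  have hQcfc : Q = cfc (fun x => Real.sqrt x - μ) A := by
    rw [hQdef, hBdef, ← cfc_const μ A hA,
      ← cfc_sub Real.sqrt (fun _ => μ) A hsqrtcont continuousOn_const]
  have hQsa : IsSelfAdjoint Q := by rw [hQcfc]; exact cfc_predicate _ A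
  have hPn : ‖P‖ ≤ (m + μ)⁻¹ := by
    rw [hPdef]
    refine norm_cfc_le (by positivity) fun x hx => ?_
    obtain ⟨h1, h2, h3⟩ := hσ1 x hx
    have hx0 : 0 < Real.sqrt x + μ := by positivity
    rw [Real.norm_eq_abs, abs_of_pos (inv_pos.mpr hx0)]
    exact inv_anti₀ (by positivity) (by linarith)
  have hQn : ‖Q‖ ≤ μ - m := by
    rw [hQcfc]
    refine norm_cfc_le (by linarith) fun x hx => ?_
    obtain ⟨h1, h2, h3⟩ := hσ1 x hx
    rw [Real.norm_eq_abs, abs_of_nonpos (by linarith)]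
    linarith
  set ρ : ℝ := (μ - m) * (m + μ)⁻¹ with hρdef
  have hρ0 : 0 ≤ ρ := by
    refine mul_nonneg (by linarith) (by positivity)
  have hρ1 : ρ < 1 := by
    have hd : ρ = (μ - m) / (m + μ) := by rw [hρdef, div_eq_mul_inv]
    rw [hd, div_lt_one (by positivity)]
    linarith
  have hpownorm : ∀ (O : H →L[ℂ] H) (r : ℝ), 0 ≤ r → ‖O‖ ≤ r → ∀ j, ‖O ^ j‖ ≤ r ^ j := by
    intro O r hr h j
    induction j with
    | zero => simp
    | succ n ih =>
        rw [pow_succ, pow_succ]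
        exact le_trans (norm_mul_le _ _) (mul_le_mul ih h (norm_nonneg O) (by positivity))
  set T : H →L[ℂ] H := A * Λ - Λ * A with hTdef
  set C0 : ℝ := (m + μ)⁻¹ with hC0
  have hC00 : 0 ≤ C0 := by rw [hC0]; positivity
  set Xk : ℕ → H →L[ℂ] H := fun k => ((-1 : ℂ)) ^ k • (P ^ (k + 1) * T * Q ^ k) with hXk
  set Yk : ℕ → H →L[ℂ] H := fun k => ((-1 : ℂ)) ^ k • (P ^ k * T * Q ^ k) with hYk
  have hnorm_gen : ∀ j l : ℕ, ‖P ^ j * T * Q ^ l‖ ≤ C0 ^ j * ‖T‖ * (μ - m) ^ l := by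
    intro j l
    calc ‖P ^ j * T * Q ^ l‖ ≤ ‖P ^ j * T‖ * ‖Q ^ l‖ := norm_mul_le _ _
      _ ≤ (‖P ^ j‖ * ‖T‖) * ‖Q ^ l‖ :=
          mul_le_mul_of_nonneg_right (norm_mul_le _ _) (norm_nonneg _)
      _ ≤ (C0 ^ j * ‖T‖) * (μ - m) ^ l := by
          refine mul_le_mul (mul_le_mul (hpownorm P C0 hC00 hPn j) le_rfl (norm_nonneg T)
            (by positivity)) (hpownorm Q (μ - m) (by linarith) hQn l) (norm_nonneg _)
            (by positivity)
      _ = C0 ^ j * ‖T‖ * (μ - m) ^ l := by ring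
  have hXknorm : ∀ k, ‖Xk k‖ ≤ (C0 * ‖T‖) * ρ ^ k := by
    intro k
    rw [hXk]; simp only
    rw [norm_smul, norm_pow, norm_neg, norm_one, one_pow, one_mul]
    refine le_trans (hnorm_gen (k + 1) k) (le_of_eq ?_)
    rw [hρdef, mul_pow, hC0]
    ring
  have hYknorm : ∀ k, ‖Yk k‖ ≤ ‖T‖ * ρ ^ k := by
    intro k
    rw [hYk]; simp only
    rw [norm_smul, norm_pow, norm_neg, norm_one, one_pow, one_mul]
    refine le_trans (hnorm_gen k k) (le_of_eq ?_)
    rw [hρdef, mul_pow, hC0]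
    ring
  have hgeom : Summable (fun k : ℕ => ρ ^ k) := summable_geometric_of_lt_one hρ0 hρ1
  have hXsumnorm : Summable (fun k => ‖Xk k‖) :=
    Summable.of_nonneg_of_le (fun k => norm_nonneg _) hXknorm (hgeom.mul_left _)
  have hXsum : Summable Xk := hXsumnorm.of_norm
  have hYsum : Summable Yk :=
    (Summable.of_nonneg_of_le (fun k => norm_nonneg _) hYknorm (hgeom.mul_left _)).of_norm
  set X : H →L[ℂ] H := ∑' k, Xk k with hX
  have hWXk : ∀ k, W * Xk k = Yk k := by
    intro k
    rw [hXk, hYk]; simp only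
    rw [mul_smul_comm]
    congr 1
    have h1 : P ^ (k + 1) * T * Q ^ k = P * (P ^ k * T * Q ^ k) := by
      rw [pow_succ']; noncomm_ring
    rw [h1, ← mul_assoc, hWP, one_mul]
  have hXkQ : ∀ k, Xk k * Q = -Yk (k + 1) := by
    intro k
    rw [hXk, hYk]; simp only
    rw [smul_mul_assoc]
    have h1 : P ^ (k + 1) * T * Q ^ k * Q = P ^ (k + 1) * T * Q ^ (k + 1) := by
      rw [mul_assoc, ← pow_succ]
    rw [h1, pow_succ ((-1 : ℂ)) k, mul_neg_one, neg_smul, neg_neg]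
  have hWX : W * X = ∑' k, Yk k := by
    rw [hX, ← hXsum.tsum_mul_left W]
    exact tsum_congr hWXk
  have hXQ : X * Q = -(∑' k, Yk (k + 1)) := by
    rw [hX, ← hXsum.tsum_mul_right Q]
    calc ∑' k, Xk k * Q = ∑' k, -Yk (k + 1) := tsum_congr hXkQ
      _ = -(∑' k, Yk (k + 1)) := tsum_neg
  have hY0 : Yk 0 = T := by rw [hYk]; simp
  have hsolX : W * X + X * Q = T := by
    rw [hWX, hXQ, hYsum.tsum_eq_zero_add, hY0]
    abel
  set Yc : H →L[ℂ] H := B * Λ - Λ * B with hYc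
  have hsolY : W * Yc + Yc * Q = T := by
    have h1 : W * Yc + Yc * Q = B * Yc + Yc * B
        + (algebraMap ℝ (H →L[ℂ] H) μ * Yc - Yc * algebraMap ℝ (H →L[ℂ] H) μ) := by
      rw [hWdef, hQdef]; noncomm_ring
    rw [h1, Algebra.commutes, sub_self, add_zero]
    rw [hYc, hTdef, ← hBB]; noncomm_ring
  have hXY : Yc = X := by
    set D : H →L[ℂ] H := Yc - X with hD
    have hD1 : W * D = -(D * Q) := by
      have e : W * (Yc - X) + (Yc - X) * Q = (W * Yc + Yc * Q) - (W * X + X * Q) := by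
        noncomm_ring
      have e2 : W * (Yc - X) + (Yc - X) * Q = 0 := by rw [e, hsolY, hsolX, sub_self]
      rw [hD]
      exact eq_neg_of_add_eq_zero_left e2
    have hDrw : D = -(P * (D * Q)) := by
      calc D = (P * W) * D := by rw [hPW, one_mul]
        _ = P * (W * D) := by rw [mul_assoc]
        _ = P * (-(D * Q)) := by rw [hD1]
        _ = -(P * (D * Q)) := by rw [mul_neg]
    have hDn : ‖D‖ ≤ ρ * ‖D‖ := by
      calc ‖D‖ = ‖P * (D * Q)‖ := by rw [← norm_neg (P * (D * Q)), ← hDrw]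
        _ ≤ ‖P‖ * (‖D‖ * ‖Q‖) :=
            le_trans (norm_mul_le _ _) (mul_le_mul_of_nonneg_left (norm_mul_le _ _)
              (norm_nonneg _))
        _ ≤ (m + μ)⁻¹ * (‖D‖ * (μ - m)) := by
            refine mul_le_mul hPn (mul_le_mul_of_nonneg_left hQn (norm_nonneg D))
              (by positivity) (by positivity)
        _ = ρ * ‖D‖ := by rw [hρdef]; ring
    have hD0 : D = 0 := by
      have hn0 : ‖D‖ = 0 := by nlinarith [norm_nonneg D]
      exact norm_eq_zero.mp hn0
    rw [hD] at hD0
    exact sub_eq_zero.mp hD0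
  have hofρ : ENNReal.ofReal ρ < 1 := ENNReal.ofReal_lt_one.mpr hρ1
  have hGfin : (1 - ENNReal.ofReal ρ)⁻¹ ≠ ⊤ := by
    refine ENNReal.inv_ne_top.mpr ?_
    rw [Ne, tsub_eq_zero_iff_le]
    exact not_le.mpr hofρ
  have htnXk : ∀ k, traceNorm ⇑(Xk k)
      ≤ ENNReal.ofReal (C0 ^ (k + 1) * (μ - m) ^ k) * traceNorm ⇑T := by
    intro k
    have e1 : Xk k = ((-1 : ℂ)) ^ k • (P ^ (k + 1) * (T * Q ^ k)) := by
      rw [hXk]; simp only; rw [mul_assoc]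
    rw [e1]
    refine le_trans (traceNorm_smul_le _ _) ?_
    rw [norm_pow, norm_neg, norm_one, one_pow, ENNReal.ofReal_one, one_mul]
    refine le_trans (tn_mul_left _ _ (hPsa.pow _)) ?_
    refine le_trans (mul_le_mul_right (tn_mul_right _ _ (hQsa.pow _)) _) ?_
    rw [← mul_assoc, ← ENNReal.ofReal_mul (norm_nonneg _)]
    refine mul_le_mul_left (ENNReal.ofReal_le_ofReal ?_) _
    exact mul_le_mul (hpownorm P C0 hC00 hPn (k + 1)) (hpownorm Q (μ - m) (by linarith) hQn k)
      (norm_nonneg _) (by positivity)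
  have htnX : traceNorm ⇑X
      ≤ (ENNReal.ofReal C0 * (1 - ENNReal.ofReal ρ)⁻¹) * traceNorm ⇑T := by
    refine le_trans (tn_tsum_le Xk hXsumnorm) ?_
    calc ∑' k, traceNorm ⇑(Xk k)
        ≤ ∑' k, ENNReal.ofReal (C0 ^ (k + 1) * (μ - m) ^ k) * traceNorm ⇑T :=
          ENNReal.tsum_le_tsum htnXk
      _ = (∑' k, ENNReal.ofReal (C0 ^ (k + 1) * (μ - m) ^ k)) * traceNorm ⇑T :=
          ENNReal.tsum_mul_right
      _ ≤ (ENNReal.ofReal C0 * (1 - ENNReal.ofReal ρ)⁻¹) * traceNorm ⇑T := by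
          refine mul_le_mul_left (le_of_eq ?_) _
          have he : ∀ k : ℕ, ENNReal.ofReal (C0 ^ (k + 1) * (μ - m) ^ k)
              = ENNReal.ofReal C0 * (ENNReal.ofReal ρ) ^ k := by
            intro k
            rw [← ENNReal.ofReal_pow hρ0, ← ENNReal.ofReal_mul hC00]
            congr 1
            rw [hρdef, mul_pow, hC0]; ring
          rw [tsum_congr he, ENNReal.tsum_mul_left, ENNReal.tsum_geometric]
  have hXfin : traceNorm ⇑X ≠ ⊤ :=
    ne_top_of_le_ne_top (ENNReal.mul_ne_top
      (ENNReal.mul_ne_top ENNReal.ofReal_ne_top hGfin) hT) htnX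
  have hYfin : traceNorm ⇑Yc ≠ ⊤ := by rw [hXY]; exact hXfin
  constructor
  · -- the inverse of A
    set PA : H →L[ℂ] H := cfc (fun x : ℝ => x⁻¹) A with hPA
    have hidc : ContinuousOn (fun x : ℝ => x) (spectrum ℝ A) := continuousOn_id
    have hinvAcont : ContinuousOn (fun x : ℝ => x⁻¹) (spectrum ℝ A) :=
      ContinuousOn.inv₀ hidc fun x hx =>
        ne_of_gt (lt_of_lt_of_le hε (hσ1 x hx).2.2)
    have hPAsa : IsSelfAdjoint PA := cfc_predicate _ A
    have hPAA : PA * A = 1 := by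
      have h1 : cfc (fun x : ℝ => x⁻¹ * x) A = PA * A := by
        rw [cfc_mul (fun x : ℝ => x⁻¹) (fun x : ℝ => x) A hinvAcont hidc, cfc_id' ℝ A, hPA]
      rw [← h1,
        cfc_congr (g := fun _ => 1) fun x hx =>
          inv_mul_cancel₀ (ne_of_gt (lt_of_lt_of_le hε (hσ1 x hx).2.2)),
        cfc_const_one ℝ A]
    have hAPA : A * PA = 1 := by
      have h1 : cfc (fun x : ℝ => x * x⁻¹) A = A * PA := by
        rw [cfc_mul (fun x : ℝ => x) (fun x : ℝ => x⁻¹) A hidc hinvAcont, cfc_id' ℝ A, hPA]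
      rw [← h1,
        cfc_congr (g := fun _ => 1) fun x hx =>
          mul_inv_cancel₀ (ne_of_gt (lt_of_lt_of_le hε (hσ1 x hx).2.2)),
        cfc_const_one ℝ A]
    have hRA : Ring.inverse A = PA := by
      have := Ring.inverse_unit (⟨A, PA, hAPA, hPAA⟩ : (H →L[ℂ] H)ˣ)
      simpa using this
    show traceNorm ⇑(Ring.inverse A * Λ - Λ * Ring.inverse A) ≠ ⊤
    rw [hRA]
    have hcid : PA * Λ - Λ * PA = -(PA * ((A * Λ - Λ * A) * PA)) :=
      commutator_inverse_eq A PA Λ hPAA hAPA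
    rw [hcid, show -(PA * ((A * Λ - Λ * A) * PA)) = ((-1 : ℂ)) • (PA * ((A * Λ - Λ * A) * PA))
      from (neg_one_smul ℂ _).symm]
    refine ne_top_of_le_ne_top ?_ (le_trans (traceNorm_smul_le _ _) (mul_le_mul_right
      (le_trans (tn_mul_left _ _ hPAsa) (mul_le_mul_right
        (tn_mul_right _ _ hPAsa) _)) _))
    exact ENNReal.mul_ne_top ENNReal.ofReal_ne_top (ENNReal.mul_ne_top ENNReal.ofReal_ne_top
      (ENNReal.mul_ne_top ENNReal.ofReal_ne_top hT))
  · -- the inverse of sqrt A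
    set PB : H →L[ℂ] H := cfc (fun x : ℝ => (Real.sqrt x)⁻¹) A with hPB
    have hsqne : ∀ x ∈ spectrum ℝ A, Real.sqrt x ≠ 0 := fun x hx =>
      ne_of_gt (lt_of_lt_of_le hm (hσ1 x hx).1)
    have hinvBcont : ContinuousOn (fun x : ℝ => (Real.sqrt x)⁻¹) (spectrum ℝ A) :=
      ContinuousOn.inv₀ hsqrtcont hsqne
    have hPBsa : IsSelfAdjoint PB := cfc_predicate _ A
    have hPBB : PB * B = 1 := by
      have h1 : cfc (fun x : ℝ => (Real.sqrt x)⁻¹ * Real.sqrt x) A = PB * B := by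
        rw [cfc_mul _ _ A hinvBcont hsqrtcont, hPB, hBdef]
      rw [← h1,
        cfc_congr (g := fun _ => 1) fun x hx => inv_mul_cancel₀ (hsqne x hx),
        cfc_const_one ℝ A]
    have hBPB : B * PB = 1 := by
      have h1 : cfc (fun x : ℝ => Real.sqrt x * (Real.sqrt x)⁻¹) A = B * PB := by
        rw [cfc_mul _ _ A hsqrtcont hinvBcont, hPB, hBdef]
      rw [← h1,
        cfc_congr (g := fun _ => 1) fun x hx => mul_inv_cancel₀ (hsqne x hx),
        cfc_const_one ℝ A]
    have hRB : Ring.inverse (CFC.sqrt A) = PB := by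
      rw [hsqrtA]
      have := Ring.inverse_unit (⟨B, PB, hBPB, hPBB⟩ : (H →L[ℂ] H)ˣ)
      simpa using this
    show traceNorm ⇑(Ring.inverse (CFC.sqrt A) * Λ - Λ * Ring.inverse (CFC.sqrt A)) ≠ ⊤
    rw [hRB]
    have hcid : PB * Λ - Λ * PB = -(PB * ((B * Λ - Λ * B) * PB)) :=
      commutator_inverse_eq B PB Λ hPBB hBPB
    rw [hcid, show -(PB * ((B * Λ - Λ * B) * PB)) = ((-1 : ℂ)) • (PB * ((B * Λ - Λ * B) * PB))
      from (neg_one_smul ℂ _).symm]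
    refine ne_top_of_le_ne_top ?_ (le_trans (traceNorm_smul_le _ _) (mul_le_mul_right
      (le_trans (tn_mul_left _ _ hPBsa) (mul_le_mul_right
        (tn_mul_right _ _ hPBsa) _)) _))
    exact ENNReal.mul_ne_top ENNReal.ofReal_ne_top (ENNReal.mul_ne_top ENNReal.ofReal_ne_top
      (ENNReal.mul_ne_top ENNReal.ofReal_ne_top hYfin))
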